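/- Let G be a finite connected simple graph and let c be a c-type edge of G, i.e., c is not a cut edge of G and there is no other edge e of G such that {c, e} is a bond. Then there exist two cycles C and C' in G, each containing the edge c, such that the intersection of the edge sets of C and C' is precisely {c}. -/

import Mathlib

/-- A bond of a connected graph `G` is a minimal nonempty set of edges of `G`
whose deletion disconnects `G`: deleting it disconnects `G`, but deleting any
proper subset leaves the graph connected. -/
def SimpleGraph.IsBond {V : Type*} (G : SimpleGraph V) (E' : Set (Sym2 V)) : Prop :=
  E'.Nonempty ∧ E' ⊆ G.edgeSet ∧ ¬ (G.deleteEdges E').Connected ∧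
    ∀ F ⊂ E', (G.deleteEdges F).Connected

namespace CTypeAux

open SimpleGraph List

variable {V : Type*}

noncomputable def bal [DecidableEq V] (F : Finset (V × V)) (t : V) : ℤ :=
  ((F.filter fun a => a.1 = t).card : ℤ) - ((F.filter fun a => a.2 = t).card : ℤ)

lemma bal_insert [DecidableEq V] {F : Finset (V × V)} {a : V × V} (h : a ∉ F) (t : V) :
    bal (insert a F) t = bal F t + (if a.1 = t then 1 else 0) - (if a.2 = t then 1 else 0) := by
  have h1 : a ∉ F.filter (fun x => x.1 = t) := fun hx => h (Finset.mem_of_mem_filter _ hx)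
  have h2 : a ∉ F.filter (fun x => x.2 = t) := fun hx => h (Finset.mem_of_mem_filter _ hx)
  unfold bal
  rw [Finset.filter_insert, Finset.filter_insert]
  split_ifs with ha hb hb
  · rw [Finset.card_insert_of_notMem h1, Finset.card_insert_of_notMem h2]; push_cast; ring
  · rw [Finset.card_insert_of_notMem h1]; push_cast; ring
  · rw [Finset.card_insert_of_notMem h2]; push_cast; ring
  · ring

lemma bal_erase [DecidableEq V] {F : Finset (V × V)} {a : V × V} (h : a ∈ F) (t : V) :
    bal (F.erase a) t = bal F t - (if a.1 = t then 1 else 0) + (if a.2 = t then 1 else 0) := by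
  have h0 : a ∉ F.erase a := Finset.notMem_erase a F
  have h1 := bal_insert h0 t
  rw [Finset.insert_erase h] at h1
  linarith

lemma bal_sdiff [DecidableEq V] {F S : Finset (V × V)} (h : S ⊆ F) (t : V) :
    bal (F \ S) t = bal F t - bal S t := by
  have e1 : (F \ S).filter (fun x => x.1 = t) =
      F.filter (fun x => x.1 = t) \ S.filter (fun x => x.1 = t) := by
    ext a; simp only [Finset.mem_filter, Finset.mem_sdiff]; tauto
  have e2 : (F \ S).filter (fun x => x.2 = t) =
      F.filter (fun x => x.2 = t) \ S.filter (fun x => x.2 = t) := by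
    ext a; simp only [Finset.mem_filter, Finset.mem_sdiff]; tauto
  have s1 : S.filter (fun x => x.1 = t) ⊆ F.filter (fun x => x.1 = t) :=
    Finset.filter_subset_filter _ h
  have s2 : S.filter (fun x => x.2 = t) ⊆ F.filter (fun x => x.2 = t) :=
    Finset.filter_subset_filter _ h
  have c1 := Finset.card_le_card s1
  have c2 := Finset.card_le_card s2
  unfold bal
  rw [e1, e2, Finset.card_sdiff_of_subset s1, Finset.card_sdiff_of_subset s2]
  omega

lemma bal_walk [DecidableEq V] {G : SimpleGraph V} {u v : V} (W : G.Walk u v)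
    (hn : (W.darts.map SimpleGraph.Dart.toProd).Nodup) (t : V) :
    bal (W.darts.map SimpleGraph.Dart.toProd).toFinset t
      = (if u = t then 1 else 0) - (if v = t then 1 else 0) := by
  induction W with
  | nil => simp [bal]
  | @cons u w v h W ih =>
    simp only [Walk.darts_cons, List.map_cons, List.toFinset_cons] at hn ⊢
    rw [List.nodup_cons] at hn
    have hnm : (⟨(u, w), h⟩ : G.Dart).toProd ∉ (W.darts.map SimpleGraph.Dart.toProd).toFinset := by
      simpa using hn.1
    rw [bal_insert hnm, ih hn.2]
    have : (⟨(u, w), h⟩ : G.Dart).toProd = (u, w) := rfl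
    rw [this]
    ring

lemma extract [DecidableEq V] {G : SimpleGraph V} {y : V} :
    ∀ (n : ℕ) (F : Finset (V × V)), F.card ≤ n → (∀ a ∈ F, G.Adj a.1 a.2) →
    ∀ u, (∀ v, v ≠ u → v ≠ y → 0 ≤ bal F v) → (u ≠ y → 1 ≤ bal F u) →
    ∃ W : G.Walk u y, (W.darts.map SimpleGraph.Dart.toProd).Nodup ∧
      ∀ a ∈ W.darts.map SimpleGraph.Dart.toProd, a ∈ F := by
  intro n
  induction n with
  | zero =>
    intro F hcard hadj u hother hu
    have hF : F = ∅ := Finset.card_eq_zero.mp (Nat.le_zero.mp hcard)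
    subst hF
    by_cases huy : u = y
    · subst huy; exact ⟨Walk.nil, by simp, by simp⟩
    · exfalso; have := hu huy; simp [bal] at this
  | succ n ih =>
    intro F hcard hadj u hother hu
    by_cases huy : u = y
    · subst huy; exact ⟨Walk.nil, by simp, by simp⟩
    · have h1 : 1 ≤ bal F u := hu huy
      have hex : ∃ a ∈ F, a.1 = u := by
        by_contra hcon
        push_neg at hcon
        have : F.filter (fun a => a.1 = u) = ∅ := by
          apply Finset.filter_eq_empty_iff.mpr
          intro a ha; exact hcon a ha
        unfold bal at h1
        rw [this] at h1
        simp only [Finset.card_empty, Nat.cast_zero, zero_sub] at h1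
        omega
      obtain ⟨a, haF, hau⟩ := hex
      have hadjuv : G.Adj u a.2 := by
        have := hadj a haF; rwa [hau] at this
      have hune : u ≠ a.2 := hadjuv.ne
      have ha : a = (u, a.2) := by rw [← hau]
      set w := a.2 with hw
      have hcard' : (F.erase a).card ≤ n := by
        have := Finset.card_erase_of_mem haF; omega
      have hadj' : ∀ b ∈ F.erase a, G.Adj b.1 b.2 := fun b hb =>
        hadj b (Finset.mem_of_mem_erase hb)
      have hbe : ∀ t, bal (F.erase a) t
          = bal F t - (if u = t then 1 else 0) + (if w = t then 1 else 0) := by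
        intro t; rw [bal_erase haF t, ← hau]
      have hother' : ∀ v, v ≠ w → v ≠ y → 0 ≤ bal (F.erase a) v := by
        intro v hvw hvy
        rw [hbe]
        by_cases hvu : u = v
        · subst hvu
          rw [if_pos rfl, if_neg (fun hh => hvw hh.symm)]
          linarith [hu huy]
        · rw [if_neg hvu, if_neg (fun hh => hvw hh.symm)]
          linarith [hother v (fun hh => hvu hh.symm) hvy]
      have hw' : w ≠ y → 1 ≤ bal (F.erase a) w := by
        intro hwy
        rw [hbe, if_neg hune, if_pos rfl]
        linarith [hother w (fun hh => hune hh.symm) hwy]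
      obtain ⟨W', hn', hm'⟩ := ih (F.erase a) hcard' hadj' w hother' hw'
      refine ⟨Walk.cons hadjuv W', ?_, ?_⟩
      · simp only [Walk.darts_cons, List.map_cons, List.nodup_cons]
        refine ⟨fun hmem => ?_, hn'⟩
        exact Finset.notMem_erase a F (ha ▸ hm' _ hmem)
      · intro b hb
        simp only [Walk.darts_cons, List.map_cons, List.mem_cons] at hb
        rcases hb with hb | hb
        · rw [hb]; exact ha ▸ haF
        · exact Finset.mem_of_mem_erase (hm' b hb)

lemma chain_prefix {r : V → V → Prop} :
    ∀ (l₁ : List V) (a c : V) (l₂ : List V),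
      List.Chain r a (l₁ ++ c :: l₂) → List.Chain r a (l₁ ++ [c])
  | [], a, c, l₂, h => by
    cases h with
    | cons_cons h1 h2 => exact List.Chain.cons h1 List.Chain.nil
  | b :: t, a, c, l₂, h => by
    cases h with
    | cons_cons h1 h2 => exact List.Chain.cons h1 (chain_prefix t b c l₂ h2)

lemma chain_concat {r : V → V → Prop} :
    ∀ (l : List V) (a c : V), List.Chain r a l →
      r ((a :: l).getLast (by simp)) c → List.Chain r a (l ++ [c])
  | [], a, c, _, h2 => by
    simp only [List.getLast_singleton] at h2
    exact List.Chain.cons h2 List.Chain.nil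
  | b :: t, a, c, h1, h2 => by
    cases h1 with
    | cons_cons hab h1 =>
      refine List.Chain.cons hab (chain_concat t b c h1 ?_)
      rwa [List.getLast_cons (by simp)] at h2

lemma chain_nodup {r : V → V → Prop} {a b : V} (h : Relation.ReflTransGen r a b) :
    ∃ l : List V, List.Chain r a l ∧ (a :: l).Nodup ∧ (a :: l).getLast (by simp) = b := by
  induction h with
  | refl => exact ⟨[], List.Chain.nil, by simp, rfl⟩
  | @tail b c hab hbc ih =>
    obtain ⟨l, hch, hnd, hlast⟩ := ih
    by_cases hc : c ∈ a :: l
    · obtain ⟨s, t, hst⟩ := List.append_of_mem hc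
      cases s with
      | nil =>
        simp only [List.nil_append, List.cons.injEq] at hst
        exact ⟨[], List.Chain.nil, by simp, by simp [hst.1]⟩
      | cons a' s' =>
        rw [List.cons_append, List.cons.injEq] at hst
        obtain ⟨rfl, hl⟩ := hst
        refine ⟨s' ++ [c], chain_prefix s' a c t (hl ▸ hch), ?_, ?_⟩
        · have hsub : (a :: (s' ++ [c])) <+ (a :: (s' ++ c :: t)) := by
            refine List.Sublist.cons₂ a (List.Sublist.append_left ?_ s')
            exact List.Sublist.cons₂ c (List.nil_sublist t)
          exact (hl ▸ hnd).sublist hsub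
        · exact List.getLast_append_singleton (a :: s')
    · refine ⟨l ++ [c], chain_concat l a c hch (hlast ▸ hbc), ?_, ?_⟩
      · rw [← List.cons_append]
        simp only [List.nodup_append, List.nodup_singleton, true_and]
        refine ⟨hnd, ?_⟩
        simp only [List.mem_singleton, forall_eq]
        exact fun z hz h => hc (h ▸ hz)
      · exact List.getLast_append_singleton (a :: l)

def pairs : V → List V → List (V × V)
  | _, [] => []
  | u, v :: l => (u, v) :: pairs v l

lemma pairs_fst_mem : ∀ (l : List V) (u p q : V), (p, q) ∈ pairs u l → p ∈ u :: l
  | [], u, p, q, h => by simp [pairs] at h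
  | v :: l, u, p, q, h => by
    rcases List.mem_cons.mp h with h | h
    · rw [Prod.mk.injEq] at h; simp [h.1]
    · exact List.mem_cons_of_mem u (pairs_fst_mem l v p q h)

lemma chain_pairs {r : V → V → Prop} :
    ∀ (l : List V) (u : V), List.Chain r u l → ∀ p q, (p, q) ∈ pairs u l → r p q
  | [], u, _, p, q, h => by simp [pairs] at h
  | v :: l, u, hch, p, q, h => by
    cases hch with
    | cons_cons h1 h2 =>
      rcases List.mem_cons.mp h with h | h
      · rw [Prod.mk.injEq] at h; rw [h.1, h.2]; exact h1
      · exact chain_pairs l v h2 p q h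

lemma reach_hom {G K' : SimpleGraph V} (h : ∀ a b : V, G.Adj a b → K'.Reachable a b)
    {u v : V} (hr : G.Reachable u v) : K'.Reachable u v := by
  obtain ⟨W⟩ := hr
  induction W with
  | nil => exact Reachable.refl _
  | cons ha _ ih => exact (h _ _ ha).trans ih

lemma reach_closed {K' : SimpleGraph V} {S : Set V}
    (hS : ∀ a b : V, K'.Adj a b → a ∈ S → b ∈ S) {u v : V}
    (h : K'.Reachable u v) (hu : u ∈ S) : v ∈ S := by
  obtain ⟨W⟩ := h
  induction W with
  | nil => exact hu
  | cons ha _ ih => exact ih (hS _ _ ha hu)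

lemma outside_stay {K : SimpleGraph V} {S : Set V} :
    ∀ {u v : V} (W : K.Walk u v),
      (∀ a b : V, (a, b) ∈ W.darts.map SimpleGraph.Dart.toProd → b ∈ S → a ∈ S) → u ∉ S →
      ∀ z ∈ W.support, z ∉ S := by
  intro u v W
  induction W with
  | nil =>
    intro _ hu z hz
    rw [Walk.support_nil, List.mem_singleton] at hz
    exact hz ▸ hu
  | @cons u w v h W ih =>
    intro hne hu z hz
    have hmemd : ((u, w) : V × V) ∈ (Walk.cons h W).darts.map SimpleGraph.Dart.toProd := by
      simp [Walk.darts_cons]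
    have hw : w ∉ S := fun hwS => hu (hne u w hmemd hwS)
    rw [Walk.support_cons, List.mem_cons] at hz
    rcases hz with rfl | hz
    · exact hu
    · exact ih (fun a b hab => hne a b (by simp [Walk.darts_cons]; right; simpa using hab)) hw z hz

lemma exit_walk {K : SimpleGraph V} {S : Set V} :
    ∀ {u v : V} (W : K.Walk u v), u ∈ S → v ∉ S →
      (∀ a b : V, (a, b) ∈ W.darts.map SimpleGraph.Dart.toProd → b ∈ S → a ∈ S) →
      ∃ (p q : V), K.Adj p q ∧ p ∈ S ∧ q ∉ S ∧
        ((p, q) : V × V) ∈ W.darts.map SimpleGraph.Dart.toProd ∧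
        (∀ a b : V, (a, b) ∈ W.darts.map SimpleGraph.Dart.toProd → a ∈ S → b ∉ S → (a, b) = (p, q)) ∧
        ∃ W₂ : K.Walk q v, (∀ e ∈ W₂.edges, e ∈ W.edges) ∧ ∀ z ∈ W₂.support, z ∉ S := by
  intro u v W
  induction W with
  | nil => intro hu hv _; exact absurd hu hv
  | @cons u w v h W ih =>
    intro hu hv hne
    have hsub : ∀ a b : V, ((a,b) : V × V) ∈ W.darts.map SimpleGraph.Dart.toProd →
        ((a,b) : V × V) ∈ (Walk.cons h W).darts.map SimpleGraph.Dart.toProd := by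
      intro a b hab; simp only [Walk.darts_cons, List.map_cons, List.mem_cons]; right; exact hab
    by_cases hwS : w ∈ S
    · obtain ⟨p, q, hpq, hpS, hqS, hmem, huniq, W₂, hW₂e, hW₂s⟩ :=
        ih hwS hv (fun a b hab => hne a b (hsub a b hab))
      refine ⟨p, q, hpq, hpS, hqS, hsub p q hmem, ?_, W₂, ?_, hW₂s⟩
      · intro a b hab haS hbS
        simp only [Walk.darts_cons, List.map_cons, List.mem_cons] at hab
        rcases hab with hab | hab
        · exfalso
          have h2 : b = w := congrArg Prod.snd hab
          exact hbS (h2 ▸ hwS)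
        · exact huniq a b hab haS hbS
      · intro e he
        rw [Walk.edges_cons, List.mem_cons]; right; exact hW₂e e he
    · refine ⟨u, w, h, hu, hwS, by simp [Walk.darts_cons], ?_, W, ?_, ?_⟩
      · intro a b hab haS hbS
        simp only [Walk.darts_cons, List.map_cons, List.mem_cons] at hab
        rcases hab with hab | hab
        · exact hab
        · exfalso
          have haW : a ∈ W.support := by
            obtain ⟨d, hd, hdp⟩ := List.mem_map.mp hab
            have h3 := Walk.dart_fst_mem_support_of_mem_darts W hd
            have h4 : d.toProd.1 = a := by rw [hdp]
            rwa [h4] at h3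
          exact (outside_stay W (fun a' b' h' => hne a' b' (hsub a' b' h')) hwS a haW) haS
      · intro e he; rw [Walk.edges_cons, List.mem_cons]; right; exact he
      · exact outside_stay W (fun a' b' h' => hne a' b' (hsub a' b' h')) hwS

def Dadj (K : SimpleGraph V) (PD : List (V × V)) (u v : V) : Prop :=
  (K.Adj u v ∧ Sym2.mk.uncurry (u, v) ∉ PD.map Sym2.mk.uncurry) ∨ (v, u) ∈ PD

noncomputable def buildF [DecidableEq V] (PE : List (Sym2 V)) :
    V → List V → Finset (V × V) → Finset (V × V)
  | _, [], F => F
  | u, v :: l, F =>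
    buildF PE v l (if Sym2.mk.uncurry (u, v) ∈ PE then F.erase (v, u) else insert (u, v) F)

lemma buildF_spec [DecidableEq V] {K : SimpleGraph V} {PD : List (V × V)} {x y : V} :
    ∀ (l : List V) (u : V) (F : Finset (V × V)),
      List.Chain (Dadj K PD) u l → (u :: l).Nodup → (u :: l).getLast (by simp) = y →
      (∀ a ∈ F, K.Adj a.1 a.2) →
      (∀ a ∈ F, ∀ b ∈ F, a ≠ b → Sym2.mk.uncurry a ≠ Sym2.mk.uncurry b) →
      (∀ t, bal F t = (if x = t then 2 else 0) - (if y = t then 1 else 0)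
          - (if u = t then 1 else 0)) →
      (∀ p q : V, (p, q) ∈ pairs u l → Sym2.mk.uncurry (p, q) ∈ PD.map Sym2.mk.uncurry →
        ((q, p) : V × V) ∈ F) →
      (∀ a ∈ F, Sym2.mk.uncurry a ∉ PD.map Sym2.mk.uncurry → a.1 ∉ u :: l) →
      (∀ a ∈ buildF (PD.map Sym2.mk.uncurry) u l F, K.Adj a.1 a.2) ∧
      (∀ a ∈ buildF (PD.map Sym2.mk.uncurry) u l F, ∀ b ∈ buildF (PD.map Sym2.mk.uncurry) u l F,
        a ≠ b → Sym2.mk.uncurry a ≠ Sym2.mk.uncurry b) ∧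
      (∀ t, bal (buildF (PD.map Sym2.mk.uncurry) u l F) t
        = (if x = t then 2 else 0) - (if y = t then 2 else 0)) := by
  intro l
  induction l with
  | nil =>
    intro u F _ _ hlast hadj hdist hbal _ _
    have huy : u = y := by simpa using hlast
    subst huy
    simp only [buildF]
    refine ⟨hadj, hdist, fun t => ?_⟩
    rw [hbal t]; split_ifs <;> ring
  | cons v l ih =>
    intro u F hch hnd hlast hadj hdist hbal hpair hnp
    cases hch with
    | cons_cons h1 hch' =>
    have hnd' : (v :: l).Nodup := hnd.of_cons
    have hu_nmem : u ∉ v :: l := (List.nodup_cons.mp hnd).1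
    have hlast' : (v :: l).getLast (by simp) = y := by
      rwa [List.getLast_cons (by simp : (v :: l) ≠ [])] at hlast
    by_cases hm : Sym2.mk.uncurry (u, v) ∈ PD.map Sym2.mk.uncurry
    · -- backward step
      have hPD : ((v, u) : V × V) ∈ PD := by
        rcases h1 with ⟨_, hn⟩ | hPD
        · exact absurd hm hn
        · exact hPD
      have hvuF : ((v, u) : V × V) ∈ F := hpair u v (by simp [pairs]) hm
      have hstep : buildF (PD.map Sym2.mk.uncurry) u (v :: l) F
          = buildF (PD.map Sym2.mk.uncurry) v l (F.erase (v, u)) := by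
        simp only [buildF, if_pos hm]
      rw [hstep]
      apply ih v (F.erase (v, u)) hch' hnd' hlast'
      · exact fun a ha => hadj a (Finset.mem_of_mem_erase ha)
      · exact fun a ha b hb hne =>
          hdist a (Finset.mem_of_mem_erase ha) b (Finset.mem_of_mem_erase hb) hne
      · intro t
        rw [bal_erase hvuF t, hbal t]
        split_ifs <;> ring
      · intro p q hpq hmq
        refine Finset.mem_erase.mpr ⟨?_, hpair p q (List.mem_cons_of_mem _ hpq) hmq⟩
        intro heq
        rw [Prod.mk.injEq] at heq
        have hp_mem : p ∈ v :: l := pairs_fst_mem l v p q hpq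
        rw [heq.2] at hp_mem
        exact hu_nmem hp_mem
      · intro a ha hmq
        have := hnp a (Finset.mem_of_mem_erase ha) hmq
        intro hmem
        exact this (List.mem_cons_of_mem _ hmem)
    · -- forward step
      have huv : K.Adj u v := by
        rcases h1 with ⟨ha, _⟩ | hPD
        · exact ha
        · exfalso
          apply hm
          rw [show (Sym2.mk.uncurry (u, v) : Sym2 V) = Sym2.mk.uncurry (v, u) from Sym2.eq_swap]
          exact List.mem_map_of_mem hPD
      have hnotF : ((u, v) : V × V) ∉ F := fun hmem =>
        (hnp (u, v) hmem hm) (List.mem_cons_self)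
      have hstep : buildF (PD.map Sym2.mk.uncurry) u (v :: l) F
          = buildF (PD.map Sym2.mk.uncurry) v l (insert (u, v) F) := by
        simp only [buildF, if_neg hm]
      rw [hstep]
      have hkey : ∀ b ∈ F, Sym2.mk.uncurry b ≠ Sym2.mk.uncurry ((u, v) : V × V) := by
        intro b hb heq
        have hb1 : b.1 ∉ u :: v :: l := hnp b hb (by rw [heq]; exact hm)
        have : (b.1 = u ∧ b.2 = v) ∨ (b.1 = v ∧ b.2 = u) := by
          have hb' : Sym2.mk.uncurry ((b.1, b.2) : V × V) = Sym2.mk.uncurry ((u, v) : V × V) := by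
            rw [← heq]
          exact Sym2.eq_iff.mp hb'
        rcases this with ⟨h', _⟩ | ⟨h', _⟩
        · apply hb1; rw [h']; exact List.mem_cons_self
        · apply hb1; rw [h']; exact List.mem_cons_of_mem u (List.mem_cons_self)
      apply ih v (insert (u, v) F) hch' hnd' hlast'
      · intro a ha
        rcases Finset.mem_insert.mp ha with rfl | ha
        · exact huv
        · exact hadj a ha
      · intro a ha b hb hne
        rcases Finset.mem_insert.mp ha with rfl | ha <;>
          rcases Finset.mem_insert.mp hb with rfl | hb
        · exact absurd rfl hne
        · exact (hkey b hb).symm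
        · exact hkey a ha
        · exact hdist a ha b hb hne
      · intro t
        rw [bal_insert hnotF t, hbal t]
        split_ifs <;> ring
      · intro p q hpq hmq
        exact Finset.mem_insert_of_mem (hpair p q (List.mem_cons_of_mem _ hpq) hmq)
      · intro a ha hmq
        rcases Finset.mem_insert.mp ha with rfl | ha
        · exact fun hmem => hu_nmem hmem
        · intro hmem
          exact hnp a ha hmq (List.mem_cons_of_mem _ hmem)

end CTypeAux

open SimpleGraph in
/-- If `c` is a c-type edge of a finite connected simple graph `G` (i.e. `c` is
not a cut edge, and `{c, e}` is a bond for no other edge `e`), then there are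
two cycles in `G`, each containing `c`, the intersection of whose edge sets is
precisely `{c}`. -/
theorem exists_two_cycles_of_cType {V : Type*} [Fintype V]
    (G : SimpleGraph V) (hG : G.Connected) (c : Sym2 V)
    (hc : c ∈ G.edgeSet) (hnb : ¬ G.IsBridge c)
    (hcType : ∀ e : Sym2 V, e ≠ c → ¬ G.IsBond {c, e}) :
    ∃ (u u' : V) (C : G.Walk u u) (C' : G.Walk u' u'),
      C.IsCycle ∧ C'.IsCycle ∧ c ∈ C.edges ∧ c ∈ C'.edges ∧
      ∀ e : Sym2 V, e ∈ C.edges → e ∈ C'.edges → e = c := by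
  classical
  revert hc hnb hcType
  induction c using Sym2.ind with
  | _ x y =>
  intro hc hnb hcType
  have hGxy : G.Adj x y := hc
  have hxy : x ≠ y := hGxy.ne
  set K := G.deleteEdges {s(x, y)} with hK
  have hcK : (s(x, y) : Sym2 V) ∉ K.edgeSet := by
    rw [hK, edgeSet_deleteEdges]; simp
  have hKsub : K.edgeSet ⊆ G.edgeSet := by
    rw [hK, edgeSet_deleteEdges]; exact Set.diff_subset
  have hKG : K ≤ G := by
    intro a b h
    rw [hK, SimpleGraph.deleteEdges_adj] at h
    exact h.1
  have hreach : K.Reachable x y := by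
    rw [isBridge_iff] at hnb
    push_neg at hnb
    exact hnb
  have hKconn : K.Connected := by
    have hne : Nonempty V := hG.nonempty
    refine ⟨fun a b => CTypeAux.reach_hom ?_ (hG.preconnected a b)⟩
    intro p q hpq
    by_cases hpc : (s(p, q) : Sym2 V) = s(x, y)
    · rcases Sym2.eq_iff.mp hpc with ⟨rfl, rfl⟩ | ⟨rfl, rfl⟩
      · exact hreach
      · exact hreach.symm
    · refine SimpleGraph.Adj.reachable ?_
      rw [hK, SimpleGraph.deleteEdges_adj]
      exact ⟨hpq, by simpa using hpc⟩
  obtain ⟨W0⟩ := hreach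
  set P := W0.bypass with hPdef
  have hPp : P.IsPath := W0.bypass_isPath
  set PD := P.darts.map SimpleGraph.Dart.toProd with hPD
  have hPE : P.edges = PD.map Sym2.mk.uncurry := by
    rw [hPD, List.map_map]; rfl
  have hPEnodup : (PD.map Sym2.mk.uncurry).Nodup := by
    rw [← hPE]; exact hPp.isTrail.edges_nodup
  have hPDnodup : PD.Nodup := hPEnodup.of_map _
  have hPDinj : ∀ a ∈ PD, ∀ b ∈ PD, Sym2.mk.uncurry a = Sym2.mk.uncurry b → a = b :=
    fun a ha b hb => List.inj_on_of_nodup_map hPEnodup ha hb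
  have hPDadj : ∀ a ∈ PD, K.Adj a.1 a.2 := by
    intro a ha
    obtain ⟨d, _, rfl⟩ := List.mem_map.mp ha
    exact d.adj
  set D := CTypeAux.Dadj K PD with hD
  set R : Set V := {v | Relation.ReflTransGen D x v} with hR
  have hxR : x ∈ R := Relation.ReflTransGen.refl
  have hnoenter : ∀ a b : V, ((a, b) : V × V) ∈ PD → b ∈ R → a ∈ R := by
    intro a b hab hbR
    exact Relation.ReflTransGen.tail hbR (Or.inr hab)
  have hyR : y ∈ R := by
    by_contra hyR
    obtain ⟨p₀, q₀, h₀, hp₀, hq₀, hmem₀, huniq, W₂, hW₂e, hW₂s⟩ :=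
      CTypeAux.exit_walk P hxR hyR (fun a b hab => hnoenter a b hab)
    have he₀K : (s(p₀, q₀) : Sym2 V) ∈ K.edgeSet := h₀
    have he₀P : (s(p₀, q₀) : Sym2 V) ∈ PD.map Sym2.mk.uncurry :=
      List.mem_map_of_mem hmem₀
    have he₀c : (s(p₀, q₀) : Sym2 V) ≠ s(x, y) := fun h => hcK (h ▸ he₀K)
    have hcross : ∀ a b : V, K.Adj a b → a ∈ R → b ∉ R → ((a, b) : V × V) = (p₀, q₀) := by
      intro a b hab haR hbR
      have habPD : ((a, b) : V × V) ∈ PD := by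
        by_cases hmP : (Sym2.mk.uncurry ((a, b) : V × V)) ∈ PD.map Sym2.mk.uncurry
        · obtain ⟨a', ha', heq⟩ := List.mem_map.mp hmP
          rcases Sym2.mk_eq_mk_iff.mp heq with h' | h'
          · exact h' ▸ ha'
          · exfalso
            apply hbR
            refine Relation.ReflTransGen.tail haR (Or.inr ?_)
            have : a' = (b, a) := by rw [h']; rfl
            exact this ▸ ha'
        · exfalso
          exact hbR (Relation.ReflTransGen.tail haR (Or.inl ⟨hab, hmP⟩))
      exact huniq a b habPD haR hbR
    have hclosed : ∀ a b : V, (K.deleteEdges {(s(p₀, q₀) : Sym2 V)}).Adj a b → a ∈ R → b ∈ R := by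
      intro a b hab haR
      by_contra hbR
      rw [SimpleGraph.deleteEdges_adj] at hab
      have heq := hcross a b hab.1 haR hbR
      apply hab.2
      have h1 : a = p₀ := congrArg Prod.fst heq
      have h2 : b = q₀ := congrArg Prod.snd heq
      rw [h1, h2]
      rfl
    have hKe : K.deleteEdges {(s(p₀, q₀) : Sym2 V)}
        = G.deleteEdges {s(x, y), s(p₀, q₀)} := by
      rw [hK, SimpleGraph.deleteEdges_deleteEdges]
      congr 1
    have hdisc : ¬ (G.deleteEdges {s(x, y), s(p₀, q₀)}).Connected := by
      intro hconn
      have hr := hconn.preconnected x y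
      rw [← hKe] at hr
      exact hyR (CTypeAux.reach_closed hclosed hr hxR)
    have hxp : (K.deleteEdges {(s(p₀, q₀) : Sym2 V)}).Reachable x p₀ := by
      have key : ∀ v, Relation.ReflTransGen D x v →
          (K.deleteEdges {(s(p₀, q₀) : Sym2 V)}).Reachable x v := by
        intro v hv
        induction hv with
        | refl => exact Reachable.refl _
        | @tail b cc hxb hstep ih =>
          refine ih.trans ?_
          have hbR : b ∈ R := hxb
          rcases hstep with ⟨hadj, hnm⟩ | hPDm
          · refine SimpleGraph.Adj.reachable ?_
            rw [SimpleGraph.deleteEdges_adj]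
            refine ⟨hadj, ?_⟩
            simp only [Set.mem_singleton_iff]
            intro heq
            exact hnm (show s(b, cc) ∈ _ from heq ▸ he₀P)
          · refine SimpleGraph.Adj.reachable ?_
            rw [SimpleGraph.deleteEdges_adj]
            refine ⟨(hPDadj _ hPDm).symm, ?_⟩
            simp only [Set.mem_singleton_iff]
            intro heq
            have hmk : Sym2.mk.uncurry ((cc, b) : V × V) = Sym2.mk.uncurry ((p₀, q₀) : V × V) := by
              show s(cc, b) = s(p₀, q₀); rw [← heq]; exact Sym2.eq_swap
            have := hPDinj _ hPDm _ hmem₀ hmk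
            have hbq : b = q₀ := congrArg Prod.snd this
            exact hq₀ (hbq ▸ hbR)
      exact key p₀ hp₀
    have hq₀y : (K.deleteEdges {(s(p₀, q₀) : Sym2 V)}).Reachable q₀ y := by
      have he₀W₂ : (s(p₀, q₀) : Sym2 V) ∉ W₂.edges := by
        intro hmem
        exact (hW₂s p₀ (SimpleGraph.Walk.fst_mem_support_of_mem_edges W₂ hmem)) hp₀
      refine ⟨W₂.transfer _ ?_⟩
      intro e he
      rw [edgeSet_deleteEdges]
      refine ⟨W₂.edges_subset_edgeSet he, ?_⟩
      simp only [Set.mem_singleton_iff]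
      intro heq
      exact he₀W₂ (heq ▸ he)
    have hKle : K.deleteEdges {(s(p₀, q₀) : Sym2 V)} ≤ G.deleteEdges {(s(p₀, q₀) : Sym2 V)} := by
      intro a b h
      rw [SimpleGraph.deleteEdges_adj] at h ⊢
      exact ⟨hKG h.1, h.2⟩
    have hGe₀conn : (G.deleteEdges {(s(p₀, q₀) : Sym2 V)}).Connected := by
      have hne : Nonempty V := hG.nonempty
      refine ⟨fun a b => CTypeAux.reach_hom ?_ (hG.preconnected a b)⟩
      intro p q hpq
      by_cases hpe : (s(p, q) : Sym2 V) = s(p₀, q₀)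
      · have hxyd : (G.deleteEdges {(s(p₀, q₀) : Sym2 V)}).Adj x y := by
          rw [SimpleGraph.deleteEdges_adj]
          refine ⟨hGxy, ?_⟩
          simp only [Set.mem_singleton_iff]
          exact fun h => he₀c h.symm
        have hbig : (G.deleteEdges {(s(p₀, q₀) : Sym2 V)}).Reachable p₀ q₀ :=
          ((hxp.mono hKle).symm.trans hxyd.reachable).trans (hq₀y.mono hKle).symm
        rcases Sym2.eq_iff.mp hpe with ⟨rfl, rfl⟩ | ⟨rfl, rfl⟩
        · exact hbig
        · exact hbig.symm
      · refine SimpleGraph.Adj.reachable ?_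
        rw [SimpleGraph.deleteEdges_adj]
        exact ⟨hpq, by simpa using hpe⟩
    refine hcType s(p₀, q₀) he₀c ⟨⟨s(x, y), by simp⟩, ?_, hdisc, ?_⟩
    · intro z hz
      rcases hz with rfl | hz
      · exact hc
      · rw [Set.mem_singleton_iff] at hz
        exact hz ▸ hKsub he₀K
    · intro Fs hFs
      have hsub := hFs.subset
      have hne := hFs.ne
      by_cases h1 : (s(x, y) : Sym2 V) ∈ Fs <;> by_cases h2 : (s(p₀, q₀) : Sym2 V) ∈ Fs
      · exfalso
        apply hne
        apply Set.Subset.antisymm hsub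
        intro z hz
        rcases hz with rfl | hz
        · exact h1
        · rw [Set.mem_singleton_iff] at hz; exact hz ▸ h2
      · have hFs1 : Fs = {s(x, y)} := by
          apply Set.Subset.antisymm
          · intro z hz
            rcases hsub hz with rfl | hz'
            · rfl
            · rw [Set.mem_singleton_iff] at hz' ⊢
              exact absurd (hz' ▸ hz) h2
          · intro z hz
            rw [Set.mem_singleton_iff] at hz
            exact hz ▸ h1
        rw [hFs1]
        exact hK ▸ hKconn
      · have hFs2 : Fs = {s(p₀, q₀)} := by
          apply Set.Subset.antisymm
          · intro z hz
            rcases hsub hz with rfl | hz'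
            · exact absurd hz h1
            · exact hz'
          · intro z hz
            rw [Set.mem_singleton_iff] at hz
            exact hz ▸ h2
        rw [hFs2]
        exact hGe₀conn
      · have hFs0 : Fs = ∅ := by
          apply Set.eq_empty_iff_forall_notMem.mpr
          intro z hz
          rcases hsub hz with rfl | hz'
          · exact h1 hz
          · rw [Set.mem_singleton_iff] at hz'
            exact h2 (hz' ▸ hz)
        rw [hFs0, SimpleGraph.deleteEdges_empty]
        exact hG
  -- Construct two edge-disjoint paths
  obtain ⟨l, hch, hnd, hlast⟩ := CTypeAux.chain_nodup hyR
  set F₀ := PD.toFinset with hF₀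
  have hF₀adj : ∀ a ∈ F₀, K.Adj a.1 a.2 := fun a ha => hPDadj a (List.mem_toFinset.mp ha)
  have hF₀dist : ∀ a ∈ F₀, ∀ b ∈ F₀, a ≠ b → Sym2.mk.uncurry a ≠ Sym2.mk.uncurry b := by
    intro a ha b hb hne heq
    exact hne (hPDinj a (List.mem_toFinset.mp ha) b (List.mem_toFinset.mp hb) heq)
  have hF₀bal : ∀ t, CTypeAux.bal F₀ t
      = (if x = t then 2 else 0) - (if y = t then 1 else 0) - (if x = t then 1 else 0) := by
    intro t
    have h1 := CTypeAux.bal_walk P hPDnodup t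
    rw [hF₀, h1]
    split_ifs <;> ring
  have hpair₀ : ∀ p q : V, (p, q) ∈ CTypeAux.pairs x l →
      Sym2.mk.uncurry ((p, q) : V × V) ∈ PD.map Sym2.mk.uncurry → ((q, p) : V × V) ∈ F₀ := by
    intro p q hpq hmq
    have hDpq : D p q := CTypeAux.chain_pairs l x hch p q hpq
    rcases hDpq with ⟨_, hn⟩ | hPDm
    · exact absurd hmq hn
    · exact List.mem_toFinset.mpr hPDm
  have hnp₀ : ∀ a ∈ F₀, Sym2.mk.uncurry a ∉ PD.map Sym2.mk.uncurry → a.1 ∉ x :: l := by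
    intro a ha hmq
    exact (hmq (List.mem_map_of_mem (List.mem_toFinset.mp ha))).elim
  obtain ⟨hFadj, hFdist, hFbal⟩ :=
    CTypeAux.buildF_spec (K := K) (PD := PD) (x := x) (y := y) l x F₀ hch hnd hlast
      hF₀adj hF₀dist hF₀bal hpair₀ hnp₀
  set F := CTypeAux.buildF (PD.map Sym2.mk.uncurry) x l F₀ with hF
  have hbx : ∀ t, t ≠ x → t ≠ y → CTypeAux.bal F t = 0 := by
    intro t htx hty
    rw [hFbal t, if_neg (fun h => htx h.symm), if_neg (fun h => hty h.symm)]
    ring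
  have e1 : (if x = x then (2:ℤ) else 0) = 2 := if_pos rfl
  have e2 : (if x = x then (1:ℤ) else 0) = 1 := if_pos rfl
  have e3 : (if y = x then (2:ℤ) else 0) = 0 := if_neg (fun h => hxy h.symm)
  have e4 : (if y = x then (1:ℤ) else 0) = 0 := if_neg (fun h => hxy h.symm)
  obtain ⟨W₁, hn₁, hm₁⟩ := CTypeAux.extract F.card F (le_refl _) hFadj x
    (fun v hvx hvy => by rw [hbx v hvx hvy])
    (fun _ => by rw [hFbal x, e1, e3]; norm_num)
  set S₁ := (W₁.darts.map SimpleGraph.Dart.toProd).toFinset with hS₁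
  have hS₁sub : S₁ ⊆ F := fun a ha => hm₁ a (List.mem_toFinset.mp ha)
  have hS₁bal := CTypeAux.bal_walk W₁ hn₁
  obtain ⟨W₂', hn₂, hm₂⟩ := CTypeAux.extract (F \ S₁).card (F \ S₁) (le_refl _)
    (fun a ha => hFadj a (Finset.mem_sdiff.mp ha).1) x
    (fun v hvx hvy => by
      rw [CTypeAux.bal_sdiff hS₁sub, hbx v hvx hvy, hS₁bal v,
        if_neg (fun h => hvx h.symm), if_neg (fun h => hvy h.symm)]
      norm_num)
    (fun _ => by
      rw [CTypeAux.bal_sdiff hS₁sub, hFbal x, hS₁bal x, e1, e2, e3, e4]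
      norm_num)
  have hedges₁ : W₁.edges = (W₁.darts.map SimpleGraph.Dart.toProd).map Sym2.mk.uncurry := by
    rw [List.map_map]; rfl
  have hedges₂ : W₂'.edges = (W₂'.darts.map SimpleGraph.Dart.toProd).map Sym2.mk.uncurry := by
    rw [List.map_map]; rfl
  have hdisj : ∀ e, e ∈ W₁.edges → e ∈ W₂'.edges → False := by
    intro e he₁ he₂
    rw [hedges₁] at he₁
    rw [hedges₂] at he₂
    obtain ⟨a, ha, hae⟩ := List.mem_map.mp he₁
    obtain ⟨b, hb, hbe⟩ := List.mem_map.mp he₂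
    have haF : a ∈ F := hm₁ a ha
    have hbF2 := hm₂ b hb
    rw [Finset.mem_sdiff] at hbF2
    have hab : a = b := by
      by_contra hne
      exact hFdist a haF b hbF2.1 hne (hae.trans hbe.symm)
    apply hbF2.2
    rw [hS₁, ← hab]
    exact List.mem_toFinset.mpr ha
  set p₁ := W₁.bypass with hp₁def
  set p₂ := W₂'.bypass with hp₂def
  have hp₁ : p₁.IsPath := W₁.bypass_isPath
  have hp₂ : p₂.IsPath := W₂'.bypass_isPath
  have hsub₁ : ∀ e ∈ p₁.edges, e ∈ G.edgeSet :=
    fun e he => hKsub (p₁.edges_subset_edgeSet he)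
  have hsub₂ : ∀ e ∈ p₂.edges, e ∈ G.edgeSet :=
    fun e he => hKsub (p₂.edges_subset_edgeSet he)
  have hq₁path : ((p₁.transfer G hsub₁).IsPath) := hp₁.transfer hsub₁
  have hq₂path : ((p₂.transfer G hsub₂).IsPath) := hp₂.transfer hsub₂
  have hq₁e : (p₁.transfer G hsub₁).edges = p₁.edges := Walk.edges_transfer p₁ hsub₁
  have hq₂e : (p₂.transfer G hsub₂).edges = p₂.edges := Walk.edges_transfer p₂ hsub₂
  have hcq₁ : (s(y, x) : Sym2 V) ∉ (p₁.transfer G hsub₁).edges := by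
    rw [hq₁e]
    intro hmem
    have h' := p₁.edges_subset_edgeSet hmem
    rw [Sym2.eq_swap] at h'
    exact hcK h'
  have hcq₂ : (s(y, x) : Sym2 V) ∉ (p₂.transfer G hsub₂).edges := by
    rw [hq₂e]
    intro hmem
    have h' := p₂.edges_subset_edgeSet hmem
    rw [Sym2.eq_swap] at h'
    exact hcK h'
  refine ⟨y, y, Walk.cons hGxy.symm (p₁.transfer G hsub₁),
    Walk.cons hGxy.symm (p₂.transfer G hsub₂), ?_, ?_, ?_, ?_, ?_⟩
  · rw [Walk.cons_isCycle_iff]; exact ⟨hq₁path, hcq₁⟩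
  · rw [Walk.cons_isCycle_iff]; exact ⟨hq₂path, hcq₂⟩
  · rw [Walk.edges_cons]
    exact List.mem_cons.mpr (Or.inl Sym2.eq_swap)
  · rw [Walk.edges_cons]
    exact List.mem_cons.mpr (Or.inl Sym2.eq_swap)
  · intro e he₁ he₂
    rw [Walk.edges_cons, List.mem_cons] at he₁ he₂
    rcases he₁ with rfl | he₁
    · exact Sym2.eq_swap
    rcases he₂ with rfl | he₂
    · exact Sym2.eq_swap
    exfalso
    apply hdisj e
    · exact W₁.edges_bypass_subset (hq₁e ▸ he₁)
    · exact W₂'.edges_bypass_subset (hq₂e ▸ he₂)
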